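/- For σ ∈ D_n, dden(σ) = denh(|σ|) + nsp(σ), where nsp(σ) = |{(i,j) : 1 ≤ i < j ≤ n, σ(i) + σ(j) < 0}| is the number of negative sum pairs; i.e., −Σ_{i∈DNeg(σ)} σ(i) − dneg(σ) = nsp(σ). -/

import Mathlib

open Finset

noncomputable section
open scoped Classical

/-- A signed permutation of `[n]` in window notation: an unsigned permutation together with
a sign vector; the window entry at `i` is `±(p i + 1)` (1-based values in `±{1,…,n}`). -/
abbrev SignedPerm (n : ℕ) := Equiv.Perm (Fin n) × (Fin n → Bool)

/-- The window entry `σ(i) ∈ ℤ` of a signed permutation. -/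
def win {n : ℕ} (σ : SignedPerm n) (i : Fin n) : ℤ :=
  if σ.2 i then -(((σ.1 i).1 : ℤ) + 1) else ((σ.1 i).1 : ℤ) + 1

/-- `neg(σ) = #{i : σ(i) < 0}`. -/
def negc {n : ℕ} (σ : SignedPerm n) : ℕ :=
  (Finset.univ.filter (fun i => win σ i < 0)).card

/-- Type `A` descent set of the window. -/
def desSetB {n : ℕ} (σ : SignedPerm n) : Finset (Fin n) :=
  Finset.univ.filter (fun i => ∃ h : i.1 + 1 < n, win σ ⟨i.1 + 1, h⟩ < win σ i)

/-- Type `A` descent number of the window. -/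
def desB {n : ℕ} (σ : SignedPerm n) : ℕ := (desSetB σ).card

/-- Type `A` major index of the window (1-based positions). -/
def majB {n : ℕ} (σ : SignedPerm n) : ℕ := ∑ i ∈ desSetB σ, (i.1 + 1)

/-- Excedance set of an (unsigned) permutation. -/
def excSetP {n : ℕ} (p : Equiv.Perm (Fin n)) : Finset (Fin n) :=
  Finset.univ.filter (fun i => i.1 < (p i).1)

/-- Excedance number of a permutation. -/
def excP {n : ℕ} (p : Equiv.Perm (Fin n)) : ℕ := (excSetP p).card

/-- Han's/Denert's statistic on `S_n`:
`denh(p) = Σ_{i∈Exc(p)} i + inv(E(p)) + inv(N(p))`. -/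
def denhP {n : ℕ} (p : Equiv.Perm (Fin n)) : ℕ :=
  (∑ i ∈ excSetP p, (i.1 + 1)) +
    (Finset.univ.filter (fun q : Fin n × Fin n => q.1 < q.2 ∧
      q.1.1 < (p q.1).1 ∧ q.2.1 < (p q.2).1 ∧ p q.2 < p q.1)).card +
    (Finset.univ.filter (fun q : Fin n × Fin n => q.1 < q.2 ∧
      ¬ q.1.1 < (p q.1).1 ∧ ¬ q.2.1 < (p q.2).1 ∧ p q.2 < p q.1)).card

/-- `ndes(σ) = des(σ) + neg(σ)`. -/
def ndes {n : ℕ} (σ : SignedPerm n) : ℕ := desB σ + negc σ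

/-- `nmaj(σ) = maj(σ) − Σ_{σ(i)<0} σ(i)`. -/
def nmaj {n : ℕ} (σ : SignedPerm n) : ℤ :=
  (majB σ : ℤ) - ∑ i ∈ Finset.univ.filter (fun i => win σ i < 0), win σ i

/-- `fdes(σ) = 2des(σ) + [σ(1)<0]`. -/
def fdes {n : ℕ} (σ : SignedPerm n) : ℕ :=
  2 * desB σ + (if h : 0 < n then (if win σ ⟨0, h⟩ < 0 then 1 else 0) else 0)

/-- `fmaj(σ) = 2maj(σ) + neg(σ)`. -/
def fmaj {n : ℕ} (σ : SignedPerm n) : ℕ := 2 * majB σ + negc σ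

/-- Absolute excedance number `excabs(σ) = exc(|σ|) + neg(σ)`. -/
def excabs {n : ℕ} (σ : SignedPerm n) : ℕ := excP σ.1 + negc σ

/-- Negative Denert statistic `nden(σ) = denh(|σ|) − Σ_{σ(i)<0} σ(i)`. -/
def nden {n : ℕ} (σ : SignedPerm n) : ℤ :=
  (denhP σ.1 : ℤ) - ∑ i ∈ Finset.univ.filter (fun i => win σ i < 0), win σ i

/-- `DNeg(σ) = {i : σ(i) < −1}`. -/
def dnegSet {n : ℕ} (σ : SignedPerm n) : Finset (Fin n) :=
  Finset.univ.filter (fun i => win σ i < -1)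

def dneg {n : ℕ} (σ : SignedPerm n) : ℕ := (dnegSet σ).card

/-- `ddes(σ) = des(σ) + dneg(σ)`. -/
def ddes {n : ℕ} (σ : SignedPerm n) : ℕ := desB σ + dneg σ

/-- `dmaj(σ) = maj(σ) − Σ_{i∈DNeg(σ)} σ(i) − dneg(σ)`. -/
def dmaj {n : ℕ} (σ : SignedPerm n) : ℤ :=
  (majB σ : ℤ) - (∑ i ∈ dnegSet σ, win σ i) - dneg σ

/-- `dexc(σ) = exc(|σ|) + dneg(σ)`. -/
def dexc {n : ℕ} (σ : SignedPerm n) : ℕ := excP σ.1 + dneg σ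

/-- `dden(σ) = denh(|σ|) − Σ_{i∈DNeg(σ)} σ(i) − dneg(σ)`. -/
def dden {n : ℕ} (σ : SignedPerm n) : ℤ :=
  (denhP σ.1 : ℤ) - (∑ i ∈ dnegSet σ, win σ i) - dneg σ

/-- Number of negative sum pairs: `nsp(σ) = #{(i,j) : i < j, σ(i) + σ(j) < 0}`. -/
def nsp {n : ℕ} (σ : SignedPerm n) : ℕ :=
  (Finset.univ.filter (fun p : Fin n × Fin n => p.1 < p.2 ∧ win σ p.1 + win σ p.2 < 0)).card

/-- for `σ ∈ D_n`, `dden(σ) = denh(|σ|) + nsp(σ)`; equivalently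
`−Σ_{i∈DNeg(σ)} σ(i) − dneg(σ) = nsp(σ)`. -/
lemma aux_card_lt {n : ℕ} (p : Equiv.Perm (Fin n)) (m : ℕ) (hm : m ≤ n) :
    (Finset.univ.filter (fun j : Fin n => (p j).1 < m)).card = m := by
  have h1 : (Finset.univ.filter (fun j : Fin n => (p j).1 < m)).card
      = (Finset.univ.filter (fun k : Fin n => k.1 < m)).card := by
    apply Finset.card_nbij (fun j => p j)
    · intro a ha; simp at ha ⊢; exact ha
    · intro a _ b _ h; exact p.injective h
    · intro k hk
      simp only [Finset.coe_filter, Set.mem_setOf_eq, Finset.mem_univ, true_and] at hk ⊢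
      exact ⟨p.symm k, by simp [hk], by simp⟩
  rw [h1]
  have h2 : Finset.filter (fun k : Fin n => k.1 < m) Finset.univ
      = (Finset.range m).attachFin (fun a ha => lt_of_lt_of_le (Finset.mem_range.mp ha) hm) := by
    ext k; simp [Finset.mem_attachFin]
  rw [h2, Finset.card_attachFin, Finset.card_range]

lemma nsp_eq {n : ℕ} (σ : SignedPerm n) :
    nsp σ = ∑ i ∈ Finset.univ.filter (fun i => win σ i < 0), (σ.1 i).1 := by
  classical
  have key : ∀ i j : Fin n, i ≠ j →
      (win σ i + win σ j < 0 ↔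
        ((σ.1 j).1 < (σ.1 i).1 ∧ win σ i < 0) ∨ ((σ.1 i).1 < (σ.1 j).1 ∧ win σ j < 0)) := by
    intro i j hij
    have hne : (σ.1 i).1 ≠ (σ.1 j).1 := fun h => hij (σ.1.injective (Fin.ext h))
    cases h1 : σ.2 i <;> cases h2 : σ.2 j <;> simp [win, h1, h2] <;> omega
  set Q := Finset.univ.filter
    (fun q : Fin n × Fin n => (σ.1 q.2).1 < (σ.1 q.1).1 ∧ win σ q.1 < 0) with hQdef
  have hnsp : nsp σ = Q.card := by
    unfold nsp
    apply Finset.card_nbij'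
      (fun q => if (σ.1 q.2).1 < (σ.1 q.1).1 then q else (q.2, q.1))
      (fun q => if q.1 < q.2 then q else (q.2, q.1))
    · intro a ha
      change a ∈ Finset.univ.filter (fun p : Fin n × Fin n => p.1 < p.2 ∧ win σ p.1 + win σ p.2 < 0) at ha
      simp only [Finset.mem_filter, Finset.mem_univ, true_and] at ha
      obtain ⟨hlt, hsum⟩ := ha
      have hne : a.1 ≠ a.2 := ne_of_lt hlt
      beta_reduce; rw [Finset.mem_coe]
      rcases (key a.1 a.2 hne).mp hsum with ⟨h1, h2⟩ | ⟨h1, h2⟩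
      · rw [if_pos h1]
        simp only [hQdef, Finset.mem_filter, Finset.mem_univ, true_and]
        exact ⟨h1, h2⟩
      · rw [if_neg (by omega)]
        simp only [hQdef, Finset.mem_filter, Finset.mem_univ, true_and]
        exact ⟨h1, h2⟩
    · intro b hb
      change b ∈ Q at hb
      simp only [hQdef, Finset.mem_filter, Finset.mem_univ, true_and] at hb
      obtain ⟨h1, h2⟩ := hb
      have hne : b.1 ≠ b.2 := by
        intro h; rw [h] at h1; omega
      have hsum : win σ b.1 + win σ b.2 < 0 := (key b.1 b.2 hne).mpr (Or.inl ⟨h1, h2⟩)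
      beta_reduce; rw [Finset.mem_coe]
      by_cases h : b.1 < b.2
      · rw [if_pos h]; simp only [Finset.mem_filter, Finset.mem_univ, true_and]
        exact ⟨h, hsum⟩
      · rw [if_neg h]; simp only [Finset.mem_filter, Finset.mem_univ, true_and]
        exact ⟨lt_of_le_of_ne (not_lt.mp h) hne.symm, by linarith⟩
    · intro a ha
      change a ∈ Finset.univ.filter (fun p : Fin n × Fin n => p.1 < p.2 ∧ win σ p.1 + win σ p.2 < 0) at ha
      simp only [Finset.mem_filter, Finset.mem_univ, true_and] at ha
      obtain ⟨hlt, _⟩ := ha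
      beta_reduce
      by_cases h : (σ.1 a.2).1 < (σ.1 a.1).1
      · rw [if_pos h, if_pos hlt]
      · rw [if_neg h]
        rw [if_neg (by simp; omega)]
    · intro b hb
      change b ∈ Q at hb
      simp only [hQdef, Finset.mem_filter, Finset.mem_univ, true_and] at hb
      obtain ⟨h1, _⟩ := hb
      beta_reduce
      by_cases h : b.1 < b.2
      · rw [if_pos h, if_pos h1]
      · rw [if_neg h]
        rw [if_neg (by simp; omega)]
  rw [hnsp]
  rw [Finset.card_eq_sum_card_fiberwise
    (f := Prod.fst) (t := Finset.univ.filter (fun i => win σ i < 0))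
    (fun x hx => by
      change x ∈ Q at hx
      simp only [hQdef, Finset.mem_coe, Finset.mem_filter, Finset.mem_univ, true_and] at hx ⊢
      exact hx.2)]
  apply Finset.sum_congr rfl
  intro i hi
  simp only [Finset.mem_filter, Finset.mem_univ, true_and] at hi
  have hfib : Q.filter (fun q => q.1 = i)
      = ({i} : Finset (Fin n)) ×ˢ (Finset.univ.filter (fun j => (σ.1 j).1 < (σ.1 i).1)) := by
    ext q
    simp only [hQdef, Finset.mem_filter, Finset.mem_univ, true_and, Finset.mem_product,
      Finset.mem_singleton]
    constructor
    · rintro ⟨⟨h1, _⟩, h3⟩; exact ⟨h3, h3 ▸ h1⟩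
    · rintro ⟨h3, h1⟩; exact ⟨⟨h3 ▸ h1, h3 ▸ hi⟩, h3⟩
  rw [hfib, Finset.card_product, Finset.card_singleton, one_mul,
    aux_card_lt σ.1 (σ.1 i).1 (le_of_lt (σ.1 i).2)]

theorem dden_eq_denh_add_nsp (n : ℕ) (σ : SignedPerm n) (hσ : Even (negc σ)) :
    dden σ = (denhP σ.1 : ℤ) + nsp σ ∧
      -(∑ i ∈ dnegSet σ, win σ i) - (dneg σ : ℤ) = nsp σ := by
  have key2 : -(∑ i ∈ dnegSet σ, win σ i) - (dneg σ : ℤ) = nsp σ := by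
      classical
      have hsub : dnegSet σ ⊆ Finset.univ.filter (fun i => win σ i < 0) := by
        intro i hi
        simp only [dnegSet, Finset.mem_filter, Finset.mem_univ, true_and] at hi ⊢
        omega
      have hzero : ∀ i ∈ Finset.univ.filter (fun i => win σ i < 0), i ∉ dnegSet σ →
          ((σ.1 i).1 : ℤ) = 0 := by
        intro i hi hni
        simp only [dnegSet, Finset.mem_filter, Finset.mem_univ, true_and, not_lt] at hi hni
        cases h1 : σ.2 i
        · simp [win, h1] at hi; omega
        · simp [win, h1] at hi hni; omega
      have h1 : ((nsp σ : ℤ)) = ∑ i ∈ dnegSet σ, ((σ.1 i).1 : ℤ) := by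
        rw [nsp_eq σ]
        push_cast
        exact (Finset.sum_subset hsub hzero).symm
      have h2 : ∑ i ∈ dnegSet σ, ((σ.1 i).1 : ℤ) = ∑ i ∈ dnegSet σ, (-(win σ i) - 1) := by
        apply Finset.sum_congr rfl
        intro i hi
        simp only [dnegSet, Finset.mem_filter, Finset.mem_univ, true_and] at hi
        cases h : σ.2 i
        · simp only [win, h, Bool.false_eq_true, if_false] at hi ⊢; omega
        · simp only [win, h, if_true] at hi ⊢; omega
      rw [h1, h2, Finset.sum_sub_distrib, Finset.sum_neg_distrib]
      simp [dneg]
  refine ⟨?_, key2⟩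
  unfold dden
  linarith
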